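/- Let k be a field and d, r natural numbers. For i = 0,…,d let V_i be a finite-dimensional k-vector space of dimension r+1; for i = 0,…,d−1 let a_i : V_i → V_{i+1} and b_i : V_{i+1} → V_i be linear maps; and for i = 0,…,d let Y_i and Z_i be subspaces of V_i. Assume: (1) Y_i ∩ Z_i = 0 for all i; (2) Y_0 = 0 and Z_d = 0; (3) for each i = 0,…,d−1, the range of a_i equals Y_{i+1}, the kernel of b_i equals Y_{i+1}, the range of b_i equals Z_i, and the kernel of a_i equals Z_i. Then there exist a nondecreasing sequence n_0 ≤ n_1 ≤ ⋯ ≤ n_r of indices in {0,…,d} and vectors s_0,…,s_r with s_j ∈ V_{n_j}, such that for each i = 0,…,d: (a) the family (t_{i,0},…,t_{i,r}) is a basis of V_i, where t_{i,j} denotes the image of s_j in V_i under the composite a_{i−1}∘⋯∘a_{n_j} when i ≥ n_j, and under the composite b_i∘⋯∘b_{n_j−1} when i < n_j; and (b) the images in the quotient V_i/(Y_i + Z_i) of those s_j with n_j = i form a basis of V_i/(Y_i + Z_i). -/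

import Mathlib

section Transfer

variable {k : Type*} [Field k] (V : ℕ → Type*) [∀ i, AddCommGroup (V i)] [∀ i, Module k (V i)]

/-- Cast along an equality of indices. -/
def castLM : {α β : ℕ} → α = β → V α →ₗ[k] V β
  | _, _, rfl => LinearMap.id

/-- The forward composite `a_{n+m-1} ∘ ⋯ ∘ a_n : V n → V (n+m)`. -/
def iterF (a : ∀ i, V i →ₗ[k] V (i + 1)) : (n j : ℕ) → (V n →ₗ[k] V (n + j))
  | _, 0 => LinearMap.id
  | n, j + 1 => (a (n + j)).comp (iterF a n j)

/-- The backward composite `b_n ∘ ⋯ ∘ b_{n+m-1} : V (n+m) → V n`. -/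
def iterB (b : ∀ i, V (i + 1) →ₗ[k] V i) : (n j : ℕ) → (V (n + j) →ₗ[k] V n)
  | _, 0 => LinearMap.id
  | n, j + 1 => (iterB b n j).comp (b (n + j))

/-- The transfer map `V n → V i`: the composite `a_{i−1} ∘ ⋯ ∘ a_n` when `n ≤ i`, and the
composite `b_i ∘ ⋯ ∘ b_{n−1}` when `i < n`. -/
def transfer (a : ∀ i, V i →ₗ[k] V (i + 1)) (b : ∀ i, V (i + 1) →ₗ[k] V i) (n i : ℕ) :
    V n →ₗ[k] V i :=
  if h : n ≤ i then (castLM V (Nat.add_sub_cancel' h)).comp (iterF V a n (i - n))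
  else (iterB V b i (n - i)).comp
    (castLM V (Nat.add_sub_cancel' (Nat.le_of_not_le h)).symm)

end Transfer


section TransferLemmas

variable {k : Type*} [Field k] {V : ℕ → Type*} [∀ i, AddCommGroup (V i)] [∀ i, Module k (V i)]
variable (a : ∀ i, V i →ₗ[k] V (i + 1)) (b : ∀ i, V (i + 1) →ₗ[k] V i)

lemma castLM_apply (k : Type*) [Field k] {V : ℕ → Type*} [∀ i, AddCommGroup (V i)]
    [∀ i, Module k (V i)] {α β : ℕ} (h : α = β) (x : V α) :
    castLM (k := k) V h x = h ▸ x := by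
  subst h; rfl

lemma castLM_comp_b {α β : ℕ} (h : α = β) :
    (castLM V h).comp (b α) = (b β).comp (castLM V (by rw [h] : α + 1 = β + 1)) := by
  subst h; rfl

lemma castLM_comp (k : Type*) [Field k] {V : ℕ → Type*} [∀ i, AddCommGroup (V i)]
    [∀ i, Module k (V i)] {α β γ : ℕ} (h1 : α = β) (h2 : β = γ) :
    (castLM (k := k) V h2).comp (castLM V h1) = castLM V (h1.trans h2) := by
  subst h1; subst h2; rfl

lemma castLM_iterF {n j1 j2 m : ℕ} (h : j1 = j2) (pf : n + j1 = m) (pf2 : n + j2 = m) :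
    (castLM V pf).comp (iterF V a n j1) = (castLM V pf2).comp (iterF V a n j2) := by
  subst h; rfl

lemma iterB_castLM {m n j1 j2 : ℕ} (h : j1 = j2) (pf : m = n + j1) (pf2 : m = n + j2) :
    (iterB V b n j1).comp (castLM V pf) = (iterB V b n j2).comp (castLM V pf2) := by
  subst h; rfl

lemma transfer_self (n : ℕ) : transfer V a b n n = LinearMap.id := by
  unfold transfer
  rw [dif_pos le_rfl]
  rw [castLM_iterF (V := V) a (Nat.sub_self n) _ rfl]
  rfl

lemma transfer_eq_cast {n i : ℕ} (h : n = i) : transfer V a b n i = castLM V h := by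
  subst h; rw [transfer_self]; rfl

lemma transfer_succ_of_le {n i : ℕ} (h : n ≤ i) :
    transfer V a b n (i + 1) = (a i).comp (transfer V a b n i) := by
  obtain ⟨e, rfl⟩ := Nat.exists_eq_add_of_le h
  unfold transfer
  rw [dif_pos (by omega), dif_pos h]
  rw [castLM_iterF (V := V) a (show n + e + 1 - n = e + 1 by omega) _ rfl,
      castLM_iterF (V := V) a (show n + e - n = e by omega) _ rfl]
  rfl

lemma iterB_succ_left (i : ℕ) : ∀ j, iterB V b i (j + 1) =
    ((b i).comp (iterB V b (i + 1) j)).comp (castLM V (by omega : i + (j + 1) = (i + 1) + j))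
  | 0 => rfl
  | j + 1 => by
    show (iterB V b i (j + 1)).comp (b (i + (j + 1))) = _
    rw [iterB_succ_left i j, LinearMap.comp_assoc,
      castLM_comp_b b (by omega : i + (j + 1) = (i + 1) + j)]
    rfl

lemma transfer_pred_of_lt {n i : ℕ} (h : i < n) :
    transfer V a b n i = (b i).comp (transfer V a b n (i + 1)) := by
  obtain ⟨e, rfl⟩ := Nat.exists_eq_add_of_le h
  unfold transfer
  rw [dif_neg (by omega)]
  cases e with
  | zero =>
    rw [dif_pos (by omega)]
    rw [iterB_castLM (V := V) b (show i + 1 + 0 - i = 1 by omega) _ rfl,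
        castLM_iterF (V := V) a (show i + 1 - (i + 1) = 0 by omega) _ rfl]
    rfl
  | succ e =>
    rw [dif_neg (by omega)]
    rw [iterB_castLM (V := V) b (show i + 1 + (e + 1) - i = (e + 1) + 1 by omega) _ (by omega),
        iterB_castLM (V := V) b (show i + 1 + (e + 1) - (i + 1) = e + 1 by omega) _ (by omega),
        iterB_succ_left (V := V) b i (e + 1), LinearMap.comp_assoc, castLM_comp]
    rfl

end TransferLemmas

section Helpers

/-- If `A ⊓ B = ⊥` and `S ⊓ (A ⊔ B) = ⊥` then `(A ⊔ S)` and `B` are disjoint. -/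
lemma aux_disj {K M : Type*} [Field K] [AddCommGroup M] [Module K M] {A B S : Submodule K M}
    (hAB : A ⊓ B = ⊥) (hS : S ⊓ (A ⊔ B) = ⊥) : Disjoint (A ⊔ S) B := by
  rw [disjoint_iff, eq_bot_iff]
  rintro x hx
  obtain ⟨hx1, hx2⟩ := Submodule.mem_inf.mp hx
  obtain ⟨u, hu, v, hv, rfl⟩ := Submodule.mem_sup.mp hx1
  have hveq : v = (u + v) - u := by abel
  have hvmem : v ∈ S ⊓ (A ⊔ B) := by
    refine Submodule.mem_inf.mpr ⟨hv, ?_⟩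
    rw [hveq]
    exact Submodule.sub_mem _ (Submodule.mem_sup_right hx2) (Submodule.mem_sup_left hu)
  rw [hS, Submodule.mem_bot] at hvmem
  have humem : u ∈ A ⊓ B := Submodule.mem_inf.mpr ⟨hu, by simpa [hvmem] using hx2⟩
  rw [hAB, Submodule.mem_bot] at humem
  simp [humem, hvmem]

/-- Split a subtype into two disjoint pieces. -/
def sumEquiv {α : Type*} (p q r : α → Prop) [DecidablePred p] (h : ∀ x, r x ↔ (p x ∨ q x))
    (hpq : ∀ x, p x → q x → False) : {x // p x} ⊕ {x // q x} ≃ {x // r x} where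
  toFun := Sum.elim (fun x => ⟨x.1, (h x.1).2 (Or.inl x.2)⟩) (fun x => ⟨x.1, (h x.1).2 (Or.inr x.2)⟩)
  invFun x := if hp : p x.1 then Sum.inl ⟨x.1, hp⟩
    else Sum.inr ⟨x.1, ((h x.1).1 x.2).resolve_left hp⟩
  left_inv := by
    rintro (⟨x, hx⟩ | ⟨x, hx⟩)
    · simp only [Sum.elim_inl]
      exact dif_pos hx
    · simp only [Sum.elim_inr]
      exact dif_neg (fun hp => hpq x hp hx)
  right_inv := by
    rintro ⟨x, hx⟩
    beta_reduce
    by_cases hp : p x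
    · rw [dif_pos hp]; rfl
    · rw [dif_neg hp]; rfl

end Helpers
/-- Simultaneous diagonalization for exact limit linear series: given `(r+1)`-dimensional
spaces `V_0, …, V_d` with maps `a_i : V_i → V_{i+1}`, `b_i : V_{i+1} → V_i` and subspaces
`Y_i, Z_i ⊆ V_i` satisfying the exactness conditions, there exist a nondecreasing sequence
`n_0 ≤ ⋯ ≤ n_r ≤ d` and vectors `s_j ∈ V_{n_j}` such that for each `i ≤ d` the iterated
images `t_{i,j}` of the `s_j` form a basis of `V_i`, and the images in `V_i/(Y_i + Z_i)`
of those `s_j` with `n_j = i` form a basis of `V_i/(Y_i + Z_i)`. -/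
theorem exact_limit_series_diagonalization (k : Type*) [Field k] (d r : ℕ)
    (V : ℕ → Type*) [∀ i, AddCommGroup (V i)] [∀ i, Module k (V i)]
    [∀ i, FiniteDimensional k (V i)]
    (hdim : ∀ i ≤ d, Module.finrank k (V i) = r + 1)
    (a : ∀ i, V i →ₗ[k] V (i + 1)) (b : ∀ i, V (i + 1) →ₗ[k] V i)
    (Y Z : ∀ i, Submodule k (V i))
    (hYZ : ∀ i ≤ d, Y i ⊓ Z i = ⊥)
    (hY0 : Y 0 = ⊥) (hZd : Z d = ⊥)
    (hra : ∀ i < d, LinearMap.range (a i) = Y (i + 1))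
    (hkb : ∀ i < d, LinearMap.ker (b i) = Y (i + 1))
    (hrb : ∀ i < d, LinearMap.range (b i) = Z i)
    (hka : ∀ i < d, LinearMap.ker (a i) = Z i) :
    ∃ (n : Fin (r + 1) → ℕ) (s : ∀ j, V (n j)),
      Monotone n ∧ (∀ j, n j ≤ d) ∧
      ∀ i ≤ d,
        (LinearIndependent k (fun j : Fin (r + 1) => transfer V a b (n j) i (s j)) ∧
          Submodule.span k
            (Set.range fun j : Fin (r + 1) => transfer V a b (n j) i (s j)) = ⊤) ∧
        (LinearIndependent k (fun j : {j : Fin (r + 1) // n j = i} =>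
            Submodule.Quotient.mk (p := Y i ⊔ Z i) (j.2 ▸ s j.1)) ∧
          Submodule.span k (Set.range fun j : {j : Fin (r + 1) // n j = i} =>
            Submodule.Quotient.mk (p := Y i ⊔ Z i) (j.2 ▸ s j.1)) = ⊤) := by
  classical
  let m : ℕ → ℕ := fun i => Module.finrank k (V i ⧸ (Y i ⊔ Z i))
  let q : ∀ i, Module.Basis (Fin (m i)) k (V i ⧸ (Y i ⊔ Z i)) := fun i => Module.finBasis k _
  choose σ hσ using fun i (t : Fin (m i)) =>
    Submodule.Quotient.mk_surjective (Y i ⊔ Z i) (q i t)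
  have hσindep : ∀ i, LinearIndependent k (σ i) := by
    intro i
    apply LinearIndependent.of_comp ((Y i ⊔ Z i).mkQ)
    have hfun : ⇑((Y i ⊔ Z i).mkQ) ∘ σ i = ⇑(q i) := funext fun t => by
      simp only [Function.comp_apply, Submodule.mkQ_apply, hσ]
    rw [hfun]
    exact (q i).linearIndependent
  have hdisj : ∀ i, Submodule.span k (Set.range (σ i)) ⊓ (Y i ⊔ Z i) = ⊥ := by
    intro i
    rw [eq_bot_iff]
    rintro x hx
    obtain ⟨hx1, hx2⟩ := Submodule.mem_inf.mp hx
    obtain ⟨cf, hcf⟩ := (Submodule.mem_span_range_iff_exists_fun k).1 hx1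
    have hmk : ∑ t, cf t • (q i t) = 0 := by
      have h1 := congrArg ((Y i ⊔ Z i).mkQ) hcf
      simp only [map_sum, map_smul, Submodule.mkQ_apply, hσ] at h1
      rw [h1, Submodule.Quotient.mk_eq_zero]
      exact hx2
    have hz := Fintype.linearIndependent_iff.1 (q i).linearIndependent cf hmk
    rw [Submodule.mem_bot, ← hcf]
    simp [hz]
  -- dimension bookkeeping
  have hq : ∀ i ≤ d, m i + Module.finrank k ↥(Y i ⊔ Z i) = r + 1 := by
    intro i hid
    have h := Submodule.finrank_quotient_add_finrank (Y i ⊔ Z i)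
    rw [hdim i hid] at h
    exact h
  have hYZsum : ∀ i ≤ d,
      Module.finrank k ↥(Y i ⊔ Z i) = Module.finrank k (Y i) + Module.finrank k (Z i) := by
    intro i hid
    have h := Submodule.finrank_sup_add_finrank_inf_eq (Y i) (Z i)
    rw [hYZ i hid, finrank_bot] at h
    omega
  have hstep : ∀ i < d, Module.finrank k (Y (i + 1)) + Module.finrank k (Z i) = r + 1 := by
    intro i hid
    have h := LinearMap.finrank_range_add_finrank_ker (a i)
    rw [hra i hid, hka i hid, hdim i (le_of_lt hid)] at h
    exact h
  obtain ⟨c, hc0, hcsucc⟩ : ∃ c : ℕ → ℕ, c 0 = 0 ∧ ∀ i, c (i + 1) = c i + m i :=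
    ⟨fun i => ∑ t ∈ Finset.range i, m t, Finset.sum_range_zero m, fun i => Finset.sum_range_succ m i⟩
  have hcmono : Monotone c := monotone_nat_of_le_succ fun i => by rw [hcsucc]; omega
  have hcY : ∀ i ≤ d, c i = Module.finrank k (Y i) := by
    intro i
    induction i with
    | zero => intro _; rw [hc0, hY0, finrank_bot]
    | succ i ih =>
      intro h
      rw [hcsucc, ih (by omega)]
      have h1 := hq i (by omega)
      have h2 := hYZsum i (by omega)
      have h3 := hstep i (by omega)
      omega
  have hctop : c (d + 1) = r + 1 := by
    have hzd : Module.finrank k (Z d) = 0 := by rw [hZd]; exact finrank_bot k _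
    have h1 := hq d le_rfl
    have h2 := hYZsum d le_rfl
    have h3 := hcY d le_rfl
    have h4 := hcsucc d
    omega
  let n : Fin (r + 1) → ℕ := fun j => Nat.findGreatest (fun i => c i ≤ (j : ℕ)) d
  have hcn : ∀ j, c (n j) ≤ (j : ℕ) := fun j =>
    Nat.findGreatest_spec (P := fun i => c i ≤ (j : ℕ)) (Nat.zero_le d) (by omega)
  have hnd : ∀ j, n j ≤ d := fun j => Nat.findGreatest_le d
  have hjc : ∀ j : Fin (r + 1), (j : ℕ) < c (n j + 1) := by
    intro j
    rcases eq_or_lt_of_le (hnd j) with h | h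
    · rw [h]
      have := j.isLt
      omega
    · by_contra hcon
      push_neg at hcon
      have := Nat.le_findGreatest (P := fun i => c i ≤ (j : ℕ)) h hcon
      have h2 : Nat.findGreatest (fun i => c i ≤ (j : ℕ)) d = n j := rfl
      omega
  have hidx : ∀ j : Fin (r + 1), (j : ℕ) - c (n j) < m (n j) := fun j => by
    have h1 := hcn j; have h2 := hjc j; have h3 := hcsucc (n j); omega
  let s : ∀ j, V (n j) := fun j => σ (n j) ⟨(j : ℕ) - c (n j), hidx j⟩
  have hmono : Monotone n := fun j j' h =>
    Nat.findGreatest_mono (P := fun i => c i ≤ (j : ℕ)) (Q := fun i => c i ≤ (j' : ℕ)) (fun t ht => ht.trans (Fin.le_def.mp h)) le_rfl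
  have hblockn : ∀ i ≤ d, ∀ x (hx : x < r + 1), c i ≤ x → x < c (i + 1) → n ⟨x, hx⟩ = i := by
    intro i hid x hx h1 h2
    have hv : ((⟨x, hx⟩ : Fin (r + 1)) : ℕ) = x := rfl
    have hge : i ≤ n ⟨x, hx⟩ := Nat.le_findGreatest (P := fun t => c t ≤ ((⟨x, hx⟩ : Fin (r + 1)) : ℕ)) hid (by omega)
    have hle : ¬ (i < n ⟨x, hx⟩) := by
      intro hlt
      have h3 := hcmono (show i + 1 ≤ n ⟨x, hx⟩ from hlt)
      have h4 := hcn ⟨x, hx⟩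
      omega
    omega
  have hblock : ∀ (j : Fin (r + 1)) (i : ℕ) (h : n j = i),
      transfer V a b (n j) i (s j) =
        σ i (Fin.cast (congrArg m h) ⟨(j : ℕ) - c (n j), hidx j⟩) := by
    intro j i h
    subst h
    rw [transfer_self]
    rfl
  have hcastmem : ∀ (j : Fin (r + 1)) (i : ℕ) (h : n j = i),
      (h ▸ s j : V i) = σ i (Fin.cast (congrArg m h) ⟨(j : ℕ) - c (n j), hidx j⟩) := by
    intro j i h
    subst h
    rfl
  have LIB : ∀ (i : ℕ) (κ : Type) (f : κ → Fin (r + 1)) (_ : Function.Injective f)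
      (hf : ∀ x, n (f x) = i),
      LinearIndependent k (fun x => transfer V a b (n (f x)) i (s (f x))) ∧
        ∀ x, transfer V a b (n (f x)) i (s (f x)) ∈ Submodule.span k (Set.range (σ i)) := by
    intro i κ f hfinj hf
    have hfun : (fun x => transfer V a b (n (f x)) i (s (f x))) =
        σ i ∘ fun x =>
          Fin.cast (congrArg m (hf x)) ⟨((f x) : ℕ) - c (n (f x)), hidx (f x)⟩ :=
      funext fun x => hblock (f x) i (hf x)
    have hJinj : Function.Injective fun x =>
        Fin.cast (congrArg m (hf x)) ⟨((f x) : ℕ) - c (n (f x)), hidx (f x)⟩ := by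
      intro x y hxy
      have h1 : ((f x) : ℕ) - c (n (f x)) = ((f y) : ℕ) - c (n (f y)) := congrArg Fin.val hxy
      have h2 := hcn (f x)
      have h3 := hcn (f y)
      rw [hf x] at h1 h2
      rw [hf y] at h1 h3
      have : ((f x) : ℕ) = ((f y) : ℕ) := by omega
      exact hfinj (Fin.ext this)
    constructor
    · rw [hfun]
      exact (hσindep i).comp _ hJinj
    · intro x
      rw [hblock (f x) i (hf x)]
      exact Submodule.subset_span (Set.mem_range_self _)
  have hYSP : ∀ i ≤ d, Disjoint (Y i ⊔ Submodule.span k (Set.range (σ i))) (Z i) :=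
    fun i hid => aux_disj (hYZ i hid) (hdisj i)
  have hZSP : ∀ i ≤ d, Disjoint (Z i ⊔ Submodule.span k (Set.range (σ i))) (Y i) :=
    fun i hid => aux_disj (by rw [inf_comm]; exact hYZ i hid) (by rw [sup_comm]; exact hdisj i)
  have hSPZ : ∀ i, Disjoint (Submodule.span k (Set.range (σ i))) (Z i) :=
    fun i => (disjoint_iff.2 (hdisj i)).mono_right le_sup_right
  have hSPY : ∀ i, Disjoint (Submodule.span k (Set.range (σ i))) (Y i) :=
    fun i => (disjoint_iff.2 (hdisj i)).mono_right le_sup_left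
  have P : ∀ i, i ≤ d →
      LinearIndependent k
        (fun j : {j : Fin (r + 1) // n j ≤ i} => transfer V a b (n j.1) i (s j.1)) ∧
      ∀ j : Fin (r + 1), n j ≤ i →
        transfer V a b (n j) i (s j) ∈ Y i ⊔ Submodule.span k (Set.range (σ i)) := by
    intro i
    induction i with
    | zero =>
      intro _
      obtain ⟨h1, h2⟩ := LIB 0 {j : Fin (r + 1) // n j ≤ 0} (fun j => j.1)
        (fun x y h => Subtype.ext h) (fun x => Nat.le_zero.mp x.2)
      refine ⟨h1, fun j hj => ?_⟩
      rw [hblock j 0 (Nat.le_zero.mp hj)]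
      exact Submodule.mem_sup_right (Submodule.subset_span (Set.mem_range_self _))
    | succ i ih =>
      intro hi1
      have hid : i ≤ d := by omega
      have hiltd : i < d := by omega
      obtain ⟨ihLI, ihmem⟩ := ih hid
      have hspan1 : Submodule.span k
          (Set.range fun j : {j : Fin (r + 1) // n j ≤ i} => transfer V a b (n j.1) i (s j.1)) ≤
          Y i ⊔ Submodule.span k (Set.range (σ i)) :=
        Submodule.span_le.2 (by rintro x ⟨jj, rfl⟩; exact ihmem jj.1 jj.2)
      have hLIv1 : LinearIndependent k
          (⇑(a i) ∘ fun j : {j : Fin (r + 1) // n j ≤ i} => transfer V a b (n j.1) i (s j.1)) :=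
        ihLI.map (by rw [hka i hiltd]; exact (hYSP i hid).mono_left hspan1)
      obtain ⟨hLIv2, hmem2⟩ := LIB (i + 1) {j : Fin (r + 1) // n j = i + 1} (fun j => j.1)
        (fun x y h => Subtype.ext h) (fun x => x.2)
      have hdisj12 : Disjoint
          (Submodule.span k (Set.range
            (⇑(a i) ∘ fun j : {j : Fin (r + 1) // n j ≤ i} => transfer V a b (n j.1) i (s j.1))))
          (Submodule.span k (Set.range
            (fun j : {j : Fin (r + 1) // n j = i + 1} =>
              transfer V a b (n j.1) (i + 1) (s j.1)))) := by
        have hr1 : Submodule.span k (Set.range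
            (⇑(a i) ∘ fun j : {j : Fin (r + 1) // n j ≤ i} => transfer V a b (n j.1) i (s j.1))) ≤
            Y (i + 1) :=
          Submodule.span_le.2 (by
            rintro x ⟨jj, rfl⟩
            exact hra i hiltd ▸ LinearMap.mem_range_self _ _)
        have hr2 : Submodule.span k (Set.range
            (fun j : {j : Fin (r + 1) // n j = i + 1} =>
              transfer V a b (n j.1) (i + 1) (s j.1))) ≤
            Submodule.span k (Set.range (σ (i + 1))) :=
          Submodule.span_le.2 (by rintro x ⟨jj, rfl⟩; exact hmem2 jj)
        exact ((hSPY (i + 1)).symm).mono hr1 hr2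
      have hsum := hLIv1.sum_type hLIv2 hdisj12
      constructor
      · have hEq : (fun j : {j : Fin (r + 1) // n j ≤ i + 1} =>
            transfer V a b (n j.1) (i + 1) (s j.1)) ∘
            ⇑(sumEquiv (fun j : Fin (r + 1) => n j ≤ i) (fun j => n j = i + 1)
              (fun j => n j ≤ i + 1) (fun x => by omega) (fun x h1 h2 => by omega)) =
            Sum.elim
              (⇑(a i) ∘ fun j : {j : Fin (r + 1) // n j ≤ i} =>
                transfer V a b (n j.1) i (s j.1))
              (fun j : {j : Fin (r + 1) // n j = i + 1} =>
                transfer V a b (n j.1) (i + 1) (s j.1)) := by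
          funext x
          rcases x with jj | jj
          · show transfer V a b (n jj.1) (i + 1) (s jj.1) =
              a i (transfer V a b (n jj.1) i (s jj.1))
            rw [transfer_succ_of_le a b jj.2]
            rfl
          · rfl
        exact (linearIndependent_equiv' _ hEq).1 hsum
      · intro j hj
        by_cases h : n j ≤ i
        · rw [transfer_succ_of_le a b h]
          show a i (transfer V a b (n j) i (s j)) ∈ _
          exact Submodule.mem_sup_left (hra i hiltd ▸ LinearMap.mem_range_self _ _)
        · rw [hblock j (i + 1) (by omega)]
          exact Submodule.mem_sup_right (Submodule.subset_span (Set.mem_range_self _))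
  have Q : ∀ e i, i + e = d →
      LinearIndependent k
        (fun j : {j : Fin (r + 1) // i ≤ n j} => transfer V a b (n j.1) i (s j.1)) ∧
      ∀ j : Fin (r + 1), i ≤ n j →
        transfer V a b (n j) i (s j) ∈ Z i ⊔ Submodule.span k (Set.range (σ i)) := by
    intro e
    induction e with
    | zero =>
      intro i hi
      obtain rfl : d = i := by omega
      obtain ⟨h1, h2⟩ := LIB d {j : Fin (r + 1) // d ≤ n j} (fun j => j.1)
        (fun x y h => Subtype.ext h) (fun x => le_antisymm (hnd x.1) x.2)
      refine ⟨h1, fun j hj => ?_⟩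
      rw [hblock j d (le_antisymm (hnd j) hj)]
      exact Submodule.mem_sup_right (Submodule.subset_span (Set.mem_range_self _))
    | succ e ihe =>
      intro i hi
      have hid : i ≤ d := by omega
      have hiltd : i < d := by omega
      obtain ⟨ihLI, ihmem⟩ := ihe (i + 1) (by omega)
      have hspan2 : Submodule.span k
          (Set.range fun j : {j : Fin (r + 1) // i + 1 ≤ n j} =>
            transfer V a b (n j.1) (i + 1) (s j.1)) ≤
          Z (i + 1) ⊔ Submodule.span k (Set.range (σ (i + 1))) :=
        Submodule.span_le.2 (by rintro x ⟨jj, rfl⟩; exact ihmem jj.1 jj.2)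
      have hLIv2 : LinearIndependent k
          (⇑(b i) ∘ fun j : {j : Fin (r + 1) // i + 1 ≤ n j} =>
            transfer V a b (n j.1) (i + 1) (s j.1)) :=
        ihLI.map (by rw [hkb i hiltd]; exact (hZSP (i + 1) (by omega)).mono_left hspan2)
      obtain ⟨hLIv1, hmem1⟩ := LIB i {j : Fin (r + 1) // n j = i} (fun j => j.1)
        (fun x y h => Subtype.ext h) (fun x => x.2)
      have hdisj12 : Disjoint
          (Submodule.span k (Set.range
            (fun j : {j : Fin (r + 1) // n j = i} => transfer V a b (n j.1) i (s j.1))))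
          (Submodule.span k (Set.range
            (⇑(b i) ∘ fun j : {j : Fin (r + 1) // i + 1 ≤ n j} =>
              transfer V a b (n j.1) (i + 1) (s j.1)))) := by
        have hr1 : Submodule.span k (Set.range
            (fun j : {j : Fin (r + 1) // n j = i} => transfer V a b (n j.1) i (s j.1))) ≤
            Submodule.span k (Set.range (σ i)) :=
          Submodule.span_le.2 (by rintro x ⟨jj, rfl⟩; exact hmem1 jj)
        have hr2 : Submodule.span k (Set.range
            (⇑(b i) ∘ fun j : {j : Fin (r + 1) // i + 1 ≤ n j} =>
              transfer V a b (n j.1) (i + 1) (s j.1))) ≤ Z i :=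
          Submodule.span_le.2 (by
            rintro x ⟨jj, rfl⟩
            exact hrb i hiltd ▸ LinearMap.mem_range_self _ _)
        exact (hSPZ i).mono hr1 hr2
      have hsum := hLIv1.sum_type hLIv2 hdisj12
      constructor
      · have hEq : (fun j : {j : Fin (r + 1) // i ≤ n j} =>
            transfer V a b (n j.1) i (s j.1)) ∘
            ⇑(sumEquiv (fun j : Fin (r + 1) => n j = i) (fun j => i + 1 ≤ n j)
              (fun j => i ≤ n j) (fun x => by omega) (fun x h1 h2 => by omega)) =
            Sum.elim
              (fun j : {j : Fin (r + 1) // n j = i} => transfer V a b (n j.1) i (s j.1))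
              (⇑(b i) ∘ fun j : {j : Fin (r + 1) // i + 1 ≤ n j} =>
                transfer V a b (n j.1) (i + 1) (s j.1)) := by
          funext x
          rcases x with jj | jj
          · rfl
          · show transfer V a b (n jj.1) i (s jj.1) =
              b i (transfer V a b (n jj.1) (i + 1) (s jj.1))
            rw [transfer_pred_of_lt a b jj.2]
            rfl
        exact (linearIndependent_equiv' _ hEq).1 hsum
      · intro j hj
        by_cases h : i + 1 ≤ n j
        · rw [transfer_pred_of_lt a b h]
          show b i (transfer V a b (n j) (i + 1) (s j)) ∈ _
          exact Submodule.mem_sup_left (hrb i hiltd ▸ LinearMap.mem_range_self _ _)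
        · rw [hblock j i (by omega)]
          exact Submodule.mem_sup_right (Submodule.subset_span (Set.mem_range_self _))
  refine ⟨n, s, hmono, hnd, ?_⟩
  intro i hid
  have hbigLI : LinearIndependent k (fun j : Fin (r + 1) => transfer V a b (n j) i (s j)) := by
    rcases eq_or_lt_of_le hid with h | hiltd
    · have hEq : (fun j : Fin (r + 1) => transfer V a b (n j) i (s j)) ∘
          ⇑(Equiv.subtypeUnivEquiv (p := fun j : Fin (r + 1) => n j ≤ i)
            (fun j => h ▸ hnd j)) =
          fun j : {j : Fin (r + 1) // n j ≤ i} => transfer V a b (n j.1) i (s j.1) := rfl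
      exact (linearIndependent_equiv' _ hEq).1 (P i hid).1
    · obtain ⟨ihLI, ihmem⟩ := Q (d - (i + 1)) (i + 1) (by omega)
      have hspan2 : Submodule.span k
          (Set.range fun j : {j : Fin (r + 1) // i + 1 ≤ n j} =>
            transfer V a b (n j.1) (i + 1) (s j.1)) ≤
          Z (i + 1) ⊔ Submodule.span k (Set.range (σ (i + 1))) :=
        Submodule.span_le.2 (by rintro x ⟨jj, rfl⟩; exact ihmem jj.1 jj.2)
      have hLIv2 : LinearIndependent k
          (⇑(b i) ∘ fun j : {j : Fin (r + 1) // i + 1 ≤ n j} =>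
            transfer V a b (n j.1) (i + 1) (s j.1)) :=
        ihLI.map (by rw [hkb i hiltd]; exact (hZSP (i + 1) (by omega)).mono_left hspan2)
      have hspan1 : Submodule.span k
          (Set.range fun j : {j : Fin (r + 1) // n j ≤ i} =>
            transfer V a b (n j.1) i (s j.1)) ≤
          Y i ⊔ Submodule.span k (Set.range (σ i)) :=
        Submodule.span_le.2 (by rintro x ⟨jj, rfl⟩; exact (P i hid).2 jj.1 jj.2)
      have hr2 : Submodule.span k (Set.range
          (⇑(b i) ∘ fun j : {j : Fin (r + 1) // i + 1 ≤ n j} =>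
            transfer V a b (n j.1) (i + 1) (s j.1))) ≤ Z i :=
        Submodule.span_le.2 (by
          rintro x ⟨jj, rfl⟩
          exact hrb i hiltd ▸ LinearMap.mem_range_self _ _)
      have hsum := (P i hid).1.sum_type hLIv2 ((hYSP i hid).mono hspan1 hr2)
      have hEq : (fun j : Fin (r + 1) => transfer V a b (n j) i (s j)) ∘
          ⇑((sumEquiv (fun j : Fin (r + 1) => n j ≤ i) (fun j => i + 1 ≤ n j)
              (fun _ => True) (fun x => by constructor <;> intro <;> [omega; trivial])
              (fun x h1 h2 => by omega)).trans
            (Equiv.subtypeUnivEquiv fun _ => trivial)) =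
          Sum.elim
            (fun j : {j : Fin (r + 1) // n j ≤ i} => transfer V a b (n j.1) i (s j.1))
            (⇑(b i) ∘ fun j : {j : Fin (r + 1) // i + 1 ≤ n j} =>
              transfer V a b (n j.1) (i + 1) (s j.1)) := by
        funext x
        rcases x with jj | jj
        · rfl
        · show transfer V a b (n jj.1) i (s jj.1) =
            b i (transfer V a b (n jj.1) (i + 1) (s jj.1))
          rw [transfer_pred_of_lt a b jj.2]
          rfl
      exact (linearIndependent_equiv' _ hEq).1 hsum
  have hJinj : Function.Injective (fun jj : {j : Fin (r + 1) // n j = i} =>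
      Fin.cast (congrArg m jj.2) ⟨(jj.1 : ℕ) - c (n jj.1), hidx jj.1⟩) := by
    intro x y hxy
    have h1 : ((x.1 : Fin (r + 1)) : ℕ) - c (n x.1) = ((y.1 : Fin (r + 1)) : ℕ) - c (n y.1) :=
      congrArg Fin.val hxy
    have h2 := hcn x.1
    have h3 := hcn y.1
    rw [x.2] at h1 h2
    rw [y.2] at h1 h3
    exact Subtype.ext (Fin.ext (by omega))
  have hJsurj : Function.Surjective (fun jj : {j : Fin (r + 1) // n j = i} =>
      Fin.cast (congrArg m jj.2) ⟨(jj.1 : ℕ) - c (n jj.1), hidx jj.1⟩) := by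
    intro t
    have h1 := hcsucc i
    have h2 : c (i + 1) ≤ c (d + 1) := hcmono (by omega)
    have hlt : c i + (t : ℕ) < r + 1 := by have := t.isLt; omega
    have hn1 : n ⟨c i + (t : ℕ), hlt⟩ = i :=
      hblockn i hid _ hlt (Nat.le_add_right _ _) (by have := t.isLt; omega)
    refine ⟨⟨⟨c i + (t : ℕ), hlt⟩, hn1⟩, ?_⟩
    refine Fin.ext ?_
    show (c i + (t : ℕ)) - c (n ⟨c i + (t : ℕ), hlt⟩) = (t : ℕ)
    rw [hn1]
    omega
  have hgfun : (fun jj : {j : Fin (r + 1) // n j = i} =>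
      Submodule.Quotient.mk (p := Y i ⊔ Z i) (jj.2 ▸ s jj.1)) =
      ⇑(q i) ∘ fun jj : {j : Fin (r + 1) // n j = i} =>
        Fin.cast (congrArg m jj.2) ⟨(jj.1 : ℕ) - c (n jj.1), hidx jj.1⟩ := by
    funext jj
    show Submodule.Quotient.mk (p := Y i ⊔ Z i) (jj.2 ▸ s jj.1) = _
    rw [hcastmem jj.1 i jj.2]
    exact hσ i _
  refine ⟨⟨hbigLI, hbigLI.span_eq_top_of_card_eq_finrank
    (by rw [Fintype.card_fin, hdim i hid])⟩, ?_, ?_⟩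
  · rw [hgfun]
    exact ((q i).linearIndependent).comp _ hJinj
  · rw [hgfun, Set.range_comp, Set.range_eq_univ.2 hJsurj, Set.image_univ]
    exact (q i).span_eq
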